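/- Suppose S is a locally maximal product-free set of size 3 in a finite group G such that every 2-element subset of S generates ⟨S⟩ and S contains no involutions. Then |G| ≤ 24. -/

import Mathlib

open scoped Pointwise

set_option linter.unusedSectionVars false
set_option linter.unusedVariables false
set_option maxHeartbeats 1000000

def productFree {G : Type*} [Group G] (S : Set G) : Prop :=
  ∀ a ∈ S, ∀ b ∈ S, a * b ∉ S

def locallyMaximalPF {G : Type*} [Group G] (S : Set G) : Prop :=
  productFree S ∧ ∀ T : Set G, productFree T → S ⊆ T → T = S

section Helpers

variable {G : Type*} [Group G] [Fintype G]

lemma card_le_of_list (L : List G) (h : ∀ g : G, g ∈ L) : Nat.card G ≤ L.length := by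
  have hs : Function.Surjective (fun i : Fin L.length => L.get i) := by
    intro g
    obtain ⟨i, hi⟩ := List.mem_iff_get.mp (h g)
    exact ⟨i, hi⟩
  simpa using Nat.card_le_card_of_surjective _ hs

lemma comm_of_isCyclic (h : IsCyclic G) (x y : G) : x * y = y * x := by
  obtain ⟨g, hg⟩ := h
  obtain ⟨m, rfl⟩ := hg x
  obtain ⟨n, rfl⟩ := hg y
  rw [← zpow_add, ← zpow_add, add_comm]

lemma cyclic_of_pair2 {x y w : G} (htop : Subgroup.closure ({x, y} : Set G) = ⊤)
    (hx : x ∈ Subgroup.zpowers w) (hy : y ∈ Subgroup.zpowers w) : IsCyclic G := by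
  refine ⟨w, fun g => ?_⟩
  have hle : (⊤ : Subgroup G) ≤ Subgroup.zpowers w := by
    rw [← htop]
    refine (Subgroup.closure_le _).mpr ?_
    intro t ht
    rw [Set.mem_insert_iff, Set.mem_singleton_iff] at ht
    rcases ht with rfl | rfl
    · exact hx
    · exact hy
  exact hle (Subgroup.mem_top g)

lemma cyclic_of_pair {x y : G} (htop : Subgroup.closure ({x, y} : Set G) = ⊤)
    (hy : y ∈ Subgroup.zpowers x) : IsCyclic G :=
  cyclic_of_pair2 htop (Subgroup.mem_zpowers x) hy

lemma conj_pow_eq (x u : G) (n : ℕ) : (x * u * x⁻¹) ^ n = x * u ^ n * x⁻¹ := by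
  induction n with
  | zero => simp
  | succ k ih => rw [pow_succ, ih, pow_succ]; group

lemma conj_iter (x u : G) (hc : x * u * x⁻¹ = u ^ 2) (k : ℕ) :
    x ^ k * u * (x ^ k)⁻¹ = u ^ 2 ^ k := by
  induction k with
  | zero => simp
  | succ k ih =>
      have : x ^ (k+1) * u * (x ^ (k+1))⁻¹ = x * (x ^ k * u * (x ^ k)⁻¹) * x⁻¹ := by group
      rw [this, ih, ← conj_pow_eq x u (2 ^ k), hc, ← pow_mul, pow_succ, mul_comm 2 (2^k)]

lemma arith_m (N m K : ℕ) (hN1 : 26 ≤ N) (hN2 : N ≤ 31) (hm : m ∣ N) (hK : K ∣ N)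
    (hd : m ∣ 2 ^ K - 1) : m = 1 ∨ m = 3 := by
  obtain ⟨d, rfl⟩ := hK
  have h2 : m ∣ 2 ^ (K * d) - 1 := by
    calc m ∣ 2 ^ K - 1 := hd
    _ ∣ (2 ^ K) ^ d - 1 ^ d := Nat.sub_dvd_pow_sub_pow _ 1 d
    _ = 2 ^ (K * d) - 1 := by rw [one_pow, pow_mul]
  have hg : m ∣ Nat.gcd (K * d) (2 ^ (K * d) - 1) := Nat.dvd_gcd hm h2
  have e1 : Nat.gcd 26 (2^26-1) = 1 := by norm_num
  have e2 : Nat.gcd 27 (2^27-1) = 1 := by norm_num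
  have e3 : Nat.gcd 28 (2^28-1) = 1 := by norm_num
  have e4 : Nat.gcd 29 (2^29-1) = 1 := by norm_num
  have e5 : Nat.gcd 30 (2^30-1) = 3 := by norm_num
  have e6 : Nat.gcd 31 (2^31-1) = 1 := by norm_num
  interval_cases h : (K * d)
  · rw [e1] at hg; exact Or.inl (Nat.dvd_one.mp hg)
  · rw [e2] at hg; exact Or.inl (Nat.dvd_one.mp hg)
  · rw [e3] at hg; exact Or.inl (Nat.dvd_one.mp hg)
  · rw [e4] at hg; exact Or.inl (Nat.dvd_one.mp hg)
  · rw [e5] at hg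
    rcases (Nat.Prime.eq_one_or_self_of_dvd (by norm_num) m hg) with h | h
    · exact Or.inl h
    · exact Or.inr h
  · rw [e6] at hg; exact Or.inl (Nat.dvd_one.mp hg)

end Helpers

def TL {G : Type*} [Group G] (x y z : G) : List G :=
  [1, x, y, z, x*x, x*y, x*z, y*x, y*y, y*z, z*x, z*y, z*z,
   x*y⁻¹, x*z⁻¹, y*x⁻¹, y*z⁻¹, z*x⁻¹, z*y⁻¹,
   x⁻¹*y, x⁻¹*z, y⁻¹*x, y⁻¹*z, z⁻¹*x, z⁻¹*y]

section CoverStruct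

variable {G : Type*} [Group G] [Fintype G] {S : Set G}

lemma memS {x y z : G} (hS : S = {x, y, z}) {t : G} (ht : t ∈ S) : t = x ∨ t = y ∨ t = z := by
  rw [hS] at ht; simpa [Set.mem_insert_iff] using ht

lemma inS₁ {x y z : G} (hS : S = {x, y, z}) : x ∈ S := by rw [hS]; simp
lemma inS₂ {x y z : G} (hS : S = {x, y, z}) : y ∈ S := by rw [hS]; simp
lemma inS₃ {x y z : G} (hS : S = {x, y, z}) : z ∈ S := by rw [hS]; simp

lemma rotS {x y z : G} (hS : S = {x, y, z}) : S = {y, z, x} := by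
  rw [hS]; ext t; simp [Set.mem_insert_iff]; tauto

lemma swapS {x y z : G} (hS : S = {x, y, z}) : S = {y, x, z} := by
  rw [hS]; ext t; simp [Set.mem_insert_iff]; tauto

lemma rot_one {x y z : G} (h : x * y * z = 1) : y * z * x = 1 := by
  have h2 : y * z * x = x⁻¹ * (x * y * z) * x := by group
  rw [h] at h2; simpa using h2

lemma memTL_mul {x y z : G} (hS : S = {x, y, z}) :
    ∀ u ∈ S, ∀ v ∈ S, u * v ∈ TL x y z := by
  intro u hu v hv
  rcases memS hS hu with rfl | rfl | rfl <;> rcases memS hS hv with rfl | rfl | rfl <;> simp [TL]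

lemma memTL_mulinv {x y z : G} (hS : S = {x, y, z}) :
    ∀ u ∈ S, ∀ v ∈ S, u * v⁻¹ ∈ TL x y z := by
  intro u hu v hv
  rcases memS hS hu with rfl | rfl | rfl <;> rcases memS hS hv with rfl | rfl | rfl <;> simp [TL]

lemma memTL_invmul {x y z : G} (hS : S = {x, y, z}) :
    ∀ u ∈ S, ∀ v ∈ S, u⁻¹ * v ∈ TL x y z := by
  intro u hu v hv
  rcases memS hS hu with rfl | rfl | rfl <;> rcases memS hS hv with rfl | rfl | rfl <;> simp [TL]

lemma memTL_self {x y z : G} (hS : S = {x, y, z}) : ∀ u ∈ S, u ∈ TL x y z := by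
  intro u hu
  rcases memS hS hu with rfl | rfl | rfl <;> simp [TL]

lemma memTL_one (x y z : G) : (1 : G) ∈ TL x y z := by simp [TL]

lemma coverStruct
    (hcov : ∀ g : G, g ∈ S ∨ g = 1 ∨ (∃ u ∈ S, ∃ v ∈ S, u * v = g) ∨
      (∃ u ∈ S, ∃ v ∈ S, g * u = v) ∨ (∃ u ∈ S, ∃ v ∈ S, u * g = v) ∨ g * g ∈ S)
    (hsq1 : ∀ s ∈ S, s * s ≠ 1)
    (hgtop : ∀ p ∈ S, ∀ q ∈ S, p ≠ q → Subgroup.closure ({p, q} : Set G) = ⊤)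
    (hnc : ¬ ∀ p q : G, p * q = q * p)
    (x y z : G) (hS : S = {x, y, z}) :
    ∀ g : G, g ∈ TL x y z ∨ (g ∉ TL x y z ∧ g * g ∈ S ∧ ∃ u ∈ S, ∃ v ∈ S, g = (u * v)⁻¹) := by
  have kill : ∀ s ∈ S, ∀ t ∈ S, t ≠ s → t ∈ Subgroup.zpowers s → False := by
    intro s hs t ht hne hz
    exact hnc (comm_of_isCyclic (cyclic_of_pair (hgtop s hs t ht (Ne.symm hne)) hz))
  intro g
  by_cases hT : g ∈ TL x y z
  · exact Or.inl hT
  right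
  refine ⟨hT, ?_⟩
  have hsq : g * g ∈ S := by
    rcases hcov g with hg | hg | ⟨u, hu, v, hv, heq⟩ | ⟨u, hu, v, hv, heq⟩ | ⟨u, hu, v, hv, heq⟩ | hg
    · exact absurd (memTL_self hS g hg) hT
    · subst hg; exact absurd (memTL_one x y z) hT
    · subst heq; exact absurd (memTL_mul hS u hu v hv) hT
    · have hgv : g = v * u⁻¹ := eq_mul_inv_of_mul_eq heq
      subst hgv; exact absurd (memTL_mulinv hS v hv u hu) hT
    · have hgv : g = u⁻¹ * v := eq_inv_mul_of_mul_eq heq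
      subst hgv; exact absurd (memTL_invmul hS u hu v hv) hT
    · exact hg
  refine ⟨hsq, ?_⟩
  rcases hcov g⁻¹ with hg | hg | ⟨u, hu, v, hv, heq⟩ | ⟨u, hu, v, hv, heq⟩ | ⟨u, hu, v, hv, heq⟩ | hg
  · -- g⁻¹ ∈ S
    exfalso
    by_cases hts : g * g = g⁻¹
    · have h2 : g⁻¹ * g⁻¹ = g := by
        rw [← mul_inv_rev, hts, inv_inv]
      exact hT (h2 ▸ memTL_mul hS g⁻¹ hg g⁻¹ hg)
    · refine kill g⁻¹ hg (g * g) hsq hts ⟨(-2 : ℤ), ?_⟩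
      show g⁻¹ ^ (-2 : ℤ) = g * g
      rw [zpow_neg, ← inv_zpow, inv_inv, zpow_two]
  · exact absurd (inv_eq_one.mp hg ▸ memTL_one x y z) hT
  · exact ⟨u, hu, v, hv, (by rw [heq, inv_inv] : (u*v)⁻¹ = g).symm⟩
  · exfalso
    have h1 : g = u * v⁻¹ := by
      have h0 : g⁻¹ = v * u⁻¹ := eq_mul_inv_of_mul_eq heq
      have := congrArg Inv.inv h0
      rwa [inv_inv, mul_inv_rev, inv_inv] at this
    exact hT (h1 ▸ memTL_mulinv hS u hu v hv)
  · exfalso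
    have h1 : g = v⁻¹ * u := by
      have h0 : g⁻¹ = u⁻¹ * v := eq_inv_mul_of_mul_eq heq
      have := congrArg Inv.inv h0
      rwa [inv_inv, mul_inv_rev, inv_inv] at this
    exact hT (h1 ▸ memTL_invmul hS v hv u hu)
  · exfalso
    by_cases hts : g⁻¹ * g⁻¹ = g * g
    · exact hsq1 _ hsq (by nth_rewrite 2 [← hts]; group)
    · refine kill (g*g) hsq (g⁻¹*g⁻¹) hg hts ⟨(-1 : ℤ), ?_⟩
      show (g * g) ^ (-1 : ℤ) = g⁻¹ * g⁻¹
      rw [zpow_neg, zpow_one, mul_inv_rev]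

lemma killCyc (hgtop : ∀ p ∈ S, ∀ q ∈ S, p ≠ q → Subgroup.closure ({p, q} : Set G) = ⊤)
    (hnc : ¬ ∀ p q : G, p * q = q * p)
    {s t : G} (hs : s ∈ S) (ht : t ∈ S) (hne : t ≠ s) (hz : t ∈ Subgroup.zpowers s) : False :=
  hnc (comm_of_isCyclic (cyclic_of_pair (hgtop s hs t ht (Ne.symm hne)) hz))

/-- Case B: the branch `g = (y*x)⁻¹` of the square-root candidates is impossible. -/
lemma killB
    (hpf : ∀ u ∈ S, ∀ v ∈ S, u * v ∉ S)
    (hgtop : ∀ p ∈ S, ∀ q ∈ S, p ≠ q → Subgroup.closure ({p, q} : Set G) = ⊤)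
    (hnc : ¬ ∀ p q : G, p * q = q * p)
    (x y z : G) (hS : S = {x, y, z})
    (hxy : x ≠ y) (hxz : x ≠ z) (hyz : y ≠ z)
    (hxyz : x * y * z = 1)
    (hN26 : 26 ≤ Nat.card G) (hN31 : Nat.card G ≤ 31)
    (hsq : (y*x)⁻¹ * (y*x)⁻¹ ∈ S) : False := by
  have hx : x ∈ S := inS₁ hS
  have hy : y ∈ S := inS₂ hS
  have hz : z ∈ S := inS₃ hS
  have hzinv : z = (x*y)⁻¹ := eq_inv_of_mul_eq_one_right hxyz
  rcases memS hS hsq with h | h | h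
  · -- (y*x)⁻² = x  ⇒  z*z = x  ⇒ cyclic kill
    have e1 : (y * x) * (y * x) = x⁻¹ := by
      have h' := congrArg Inv.inv h
      rwa [mul_inv_rev, inv_inv] at h'
    have e2 : y * z = x⁻¹ := by rw [hzinv]; group
    have e3 : x * y * x = z := by
      have h4 := e1.trans e2.symm
      calc x * y * x = y⁻¹ * ((y * x) * (y * x)) := by group
        _ = y⁻¹ * (y * z) := by rw [h4]
        _ = z := by group
    have e4 : z * z = x := by
      nth_rewrite 1 [hzinv]
      rw [← e3]; group
    exact killCyc hgtop hnc hz hx hxz ⟨(2:ℤ), by show z ^ (2:ℤ) = x; rw [zpow_two]; exact e4⟩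
  · -- (y*x)⁻² = y  ⇒  z*z = y  ⇒ cyclic kill
    have e1 : (y * x) * (y * x) = y⁻¹ := by
      have h' := congrArg Inv.inv h
      rwa [mul_inv_rev, inv_inv] at h'
    have e2 : z * x = y⁻¹ := by rw [hzinv]; group
    have e3 : y * x * y = z := by
      have h4 := e1.trans e2.symm
      calc y * x * y = ((y * x) * (y * x)) * x⁻¹ := by group
        _ = (z * x) * x⁻¹ := by rw [h4]
        _ = z := by group
    have e4 : z * z = y := by
      nth_rewrite 2 [hzinv]
      rw [← e3]; group
    exact killCyc hgtop hnc hz hy hyz ⟨(2:ℤ), by show z ^ (2:ℤ) = y; rw [zpow_two]; exact e4⟩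
  · -- (y*x)⁻² = z : conjugation relation, order analysis
    have hzinv' : z⁻¹ = x * y := by rw [hzinv]; group
    have hu2 : (y*x) * (y*x) = x * y := by
      have e1 : (y*x) * (y*x) = z⁻¹ := by
        have h' := congrArg Inv.inv h
        rwa [mul_inv_rev, inv_inv] at h'
      rw [e1, hzinv']
    have hc : x * (y*x) * x⁻¹ = (y*x) ^ 2 := by
      calc x * (y*x) * x⁻¹ = x * y := by group
        _ = (y*x) * (y*x) := hu2.symm
        _ = (y*x) ^ 2 := (pow_two _).symm
    have hKpow : x ^ (orderOf x) = 1 := pow_orderOf_eq_one x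
    have h1 : (y*x) ^ 2 ^ (orderOf x) = (y*x) := by
      have h0 := conj_iter x (y*x) hc (orderOf x)
      rw [hKpow] at h0
      simpa using h0.symm
    have h2 : (y*x) ^ (2 ^ (orderOf x) - 1) = 1 := by
      have hge : 1 ≤ 2 ^ (orderOf x) := Nat.one_le_two_pow
      have h3 : (y*x) ^ (2 ^ (orderOf x) - 1) * (y*x) = 1 * (y*x) := by
        rw [← pow_succ, Nat.sub_add_cancel hge, h1, one_mul]
      exact mul_right_cancel h3
    have hm : orderOf (y*x) ∣ 2 ^ (orderOf x) - 1 := orderOf_dvd_of_pow_eq_one h2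
    have hmN : orderOf (y*x) ∣ Nat.card G := by
      rw [Nat.card_eq_fintype_card]; exact orderOf_dvd_card
    have hKN : orderOf x ∣ Nat.card G := by
      rw [Nat.card_eq_fintype_card]; exact orderOf_dvd_card
    rcases arith_m (Nat.card G) (orderOf (y*x)) (orderOf x) hN26 hN31 hmN hKN hm with h1' | h3'
    · -- y*x = 1 : y = x⁻¹, cyclic kill
      have hu1 : (y*x) = 1 := orderOf_eq_one_iff.mp h1'
      have hyx : y = x⁻¹ := eq_inv_of_mul_eq_one_left hu1
      exact killCyc hgtop hnc hx hy (Ne.symm hxy)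
        ⟨(-1 : ℤ), by show x ^ (-1:ℤ) = y; rw [zpow_neg, zpow_one, hyx]⟩
    · -- orderOf (y*x) = 3 : z = y*x ∈ S, contradicting product-freeness
      have hu3 : (y*x) ^ 3 = 1 := h3' ▸ pow_orderOf_eq_one (y*x)
      have huu : (y*x) * (y*x) = (y*x)⁻¹ := by
        have h4 : (y*x) * (y*x) * (y*x) = 1 := by
          have h5 : (y*x) ^ 3 = (y*x) * (y*x) * (y*x) := by rw [pow_succ, pow_two]
          rw [← h5, hu3]
        exact eq_inv_of_mul_eq_one_left h4
      have hzu : z = y*x := by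
        calc z = (y*x)⁻¹ * (y*x)⁻¹ := h.symm
          _ = ((y*x) * (y*x))⁻¹ := (mul_inv_rev _ _).symm
          _ = ((y*x)⁻¹)⁻¹ := by rw [huu]
          _ = y*x := inv_inv _
      exact hpf y hy x hx (hzu ▸ hz)

/-- Case B: the branch `g = (x*x)⁻¹` is impossible once `N ≤ 28`. -/
lemma killBsq
    (hne1 : ∀ s ∈ S, s ≠ (1:G))
    (hgtop : ∀ p ∈ S, ∀ q ∈ S, p ≠ q → Subgroup.closure ({p, q} : Set G) = ⊤)
    (hnc : ¬ ∀ p q : G, p * q = q * p)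
    (x y z : G) (hS : S = {x, y, z}) (hyx : y ≠ x) (hzx : z ≠ x)
    (hN26 : 26 ≤ Nat.card G) (hN28 : Nat.card G ≤ 28)
    (hsq : (x*x)⁻¹ * (x*x)⁻¹ ∈ S) : False := by
  have hx : x ∈ S := inS₁ hS
  have hy : y ∈ S := inS₂ hS
  have hz : z ∈ S := inS₃ hS
  have hpow : ∀ t : G, (x*x)⁻¹ * (x*x)⁻¹ = t → x ^ (-4 : ℤ) = t := by
    intro t ht
    have e : x ^ (4:ℤ) = (x*x)*(x*x) := by
      rw [show (4:ℤ) = 2+2 by norm_num, zpow_add, zpow_two]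
    rw [zpow_neg, e, mul_inv_rev]
    exact ht
  rcases memS hS hsq with h | h | h
  · -- x^5 = 1
    have h2 : (x*x)*(x*x) * ((x*x)⁻¹ * (x*x)⁻¹) = (x*x)*(x*x) * x := by rw [h]
    have h3 : (x*x)*(x*x) * ((x*x)⁻¹ * (x*x)⁻¹) = 1 := by group
    rw [h3] at h2
    have h4 : x ^ (5:ℕ) = (x*x)*(x*x)*x := by
      rw [show (5:ℕ) = 1+1+1+1+1 from rfl, pow_succ, pow_succ, pow_succ, pow_succ, pow_one]
      simp [mul_assoc]
    have h5 : x ^ (5:ℕ) = 1 := by rw [h4, ← mul_assoc] at *; rw [h4]; exact h2.symm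
    have hd : orderOf x ∣ 5 := orderOf_dvd_of_pow_eq_one h5
    rcases (Nat.dvd_prime (by norm_num)).mp hd with h1' | h5'
    · exact hne1 x hx (orderOf_eq_one_iff.mp h1')
    · have : (5:ℕ) ∣ Nat.card G := by
        rw [Nat.card_eq_fintype_card, ← h5']; exact orderOf_dvd_card
      omega
  · exact killCyc hgtop hnc hx hy hyx ⟨(-4 : ℤ), hpow y h⟩
  · exact killCyc hgtop hnc hx hz hzx ⟨(-4 : ℤ), hpow z h⟩

/-- Case B : some ordering of S multiplies to 1. -/
lemma caseB
    (hpf : ∀ u ∈ S, ∀ v ∈ S, u * v ∉ S)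
    (hcov : ∀ g : G, g ∈ S ∨ g = 1 ∨ (∃ u ∈ S, ∃ v ∈ S, u * v = g) ∨
      (∃ u ∈ S, ∃ v ∈ S, g * u = v) ∨ (∃ u ∈ S, ∃ v ∈ S, u * g = v) ∨ g * g ∈ S)
    (hne1 : ∀ s ∈ S, s ≠ (1:G))
    (hsq1 : ∀ s ∈ S, s * s ≠ 1)
    (hgtop : ∀ p ∈ S, ∀ q ∈ S, p ≠ q → Subgroup.closure ({p, q} : Set G) = ⊤)
    (hnc : ¬ ∀ p q : G, p * q = q * p)
    (x y z : G) (hS : S = {x, y, z}) (hxy : x ≠ y) (hxz : x ≠ z) (hyz : y ≠ z)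
    (hxyz : x * y * z = 1) : Nat.card G ≤ 24 := by
  by_contra hgt
  push_neg at hgt
  have struct := coverStruct hcov hsq1 hgtop hnc x y z hS
  have hxS : x ∈ S := inS₁ hS
  have hyS : y ∈ S := inS₂ hS
  have hzS : z ∈ S := inS₃ hS
  have hS2 : S = {y, z, x} := rotS hS
  have hS3 : S = {z, x, y} := rotS hS2
  have hxyz2 : y * z * x = 1 := rot_one hxyz
  have hxyz3 : z * x * y = 1 := rot_one hxyz2
  have hzv : (x*y)⁻¹ = z := (eq_inv_of_mul_eq_one_right hxyz).symm
  have hxv : (y*z)⁻¹ = x := (eq_inv_of_mul_eq_one_right hxyz2).symm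
  have hyv : (z*x)⁻¹ = y := (eq_inv_of_mul_eq_one_right hxyz3).symm
  have h31 : Nat.card G ≤ 31 := by
    have hlen : (TL x y z ++ [(x*x)⁻¹, (y*y)⁻¹, (z*z)⁻¹, (y*x)⁻¹, (z*y)⁻¹, (x*z)⁻¹]).length = 31 := by
      simp [TL]
    rw [← hlen]
    apply card_le_of_list
    intro g
    rcases struct g with hg | ⟨hT, hsq, u, hu, v, hv, rfl⟩
    · exact List.mem_append_left _ hg
    · rcases memS hS hu with h1|h1|h1 <;> rcases memS hS hv with h2|h2|h2 <;> rw [h1, h2] at hT hsq ⊢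
      · exact List.mem_append_right _ (by simp)
      · rw [hzv]; exact List.mem_append_left _ (memTL_self hS z hzS)
      · exact List.mem_append_right _ (by simp)
      · exact List.mem_append_right _ (by simp)
      · exact List.mem_append_right _ (by simp)
      · rw [hxv]; exact List.mem_append_left _ (memTL_self hS x hxS)
      · rw [hyv]; exact List.mem_append_left _ (memTL_self hS y hyS)
      · exact List.mem_append_right _ (by simp)
      · exact List.mem_append_right _ (by simp)
  have h26 : 26 ≤ Nat.card G := by
    rcases Nat.lt_or_ge (Nat.card G) 26 with hlt | hge
    · exfalso
      have h25 : Nat.card G = 25 := by omega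
      have : Fact (Nat.Prime 5) := ⟨by norm_num⟩
      exact hnc (IsPGroup.commutative_of_card_eq_prime_sq (p := 5) (by rw [h25]; norm_num))
    · exact hge
  have h28 : Nat.card G ≤ 28 := by
    have hlen : (TL x y z ++ [(x*x)⁻¹, (y*y)⁻¹, (z*z)⁻¹]).length = 28 := by simp [TL]
    rw [← hlen]
    apply card_le_of_list
    intro g
    rcases struct g with hg | ⟨hT, hsq, u, hu, v, hv, rfl⟩
    · exact List.mem_append_left _ hg
    · rcases memS hS hu with h1|h1|h1 <;> rcases memS hS hv with h2|h2|h2 <;> rw [h1, h2] at hT hsq ⊢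
      · exact List.mem_append_right _ (by simp)
      · rw [hzv]; exact List.mem_append_left _ (memTL_self hS z hzS)
      · exact (killB hpf hgtop hnc z x y hS3 (Ne.symm hxz) (Ne.symm hyz) hxy hxyz3 h26 h31 hsq).elim
      · exact (killB hpf hgtop hnc x y z hS hxy hxz hyz hxyz h26 h31 hsq).elim
      · exact List.mem_append_right _ (by simp)
      · rw [hxv]; exact List.mem_append_left _ (memTL_self hS x hxS)
      · rw [hyv]; exact List.mem_append_left _ (memTL_self hS y hyS)
      · exact (killB hpf hgtop hnc y z x hS2 hyz (Ne.symm hxy) (Ne.symm hxz) hxyz2 h26 h31 hsq).elim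
      · exact List.mem_append_right _ (by simp)
  have h25 : Nat.card G ≤ 25 := by
    have hlen : (TL x y z).length = 25 := by simp [TL]
    rw [← hlen]
    apply card_le_of_list
    intro g
    rcases struct g with hg | ⟨hT, hsq, u, hu, v, hv, rfl⟩
    · exact hg
    · exfalso
      rcases memS hS hu with h1|h1|h1 <;> rcases memS hS hv with h2|h2|h2 <;> rw [h1, h2] at hT hsq
      · exact killBsq hne1 hgtop hnc x y z hS (Ne.symm hxy) (Ne.symm hxz) h26 h28 hsq
      · exact hT (by rw [hzv]; exact memTL_self hS z hzS)
      · exact killB hpf hgtop hnc z x y hS3 (Ne.symm hxz) (Ne.symm hyz) hxy hxyz3 h26 h31 hsq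
      · exact killB hpf hgtop hnc x y z hS hxy hxz hyz hxyz h26 h31 hsq
      · exact killBsq hne1 hgtop hnc y z x hS2 (Ne.symm hyz) hxy h26 h28 hsq
      · exact hT (by rw [hxv]; exact memTL_self hS x hxS)
      · exact hT (by rw [hyv]; exact memTL_self hS y hyS)
      · exact killB hpf hgtop hnc y z x hS2 hyz (Ne.symm hxy) (Ne.symm hxz) hxyz2 h26 h31 hsq
      · exact killBsq hne1 hgtop hnc z x y hS3 hxz hyz h26 h28 hsq
  omega

/-- Case A: analysis of a live square-root candidate. -/
lemma aliveA
    (hne1 : ∀ s ∈ S, s ≠ (1:G))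
    (hgtop : ∀ p ∈ S, ∀ q ∈ S, p ≠ q → Subgroup.closure ({p, q} : Set G) = ⊤)
    (hnc : ¬ ∀ p q : G, p * q = q * p)
    (u v w : G) (hS : S = {u, v, w}) (huv : u ≠ v)
    (hcw : w * w * w = 1)
    (L : List G) (h1T : (1:G) ∈ L) (hwwT : w*w ∈ L)
    (hT : (u*v)⁻¹ ∉ L) (hsq : (u*v)⁻¹ * (u*v)⁻¹ ∈ S) :
    (u*v)⁻¹ * (u*v)⁻¹ = w ∧ orderOf ((u*v)⁻¹) = 6 := by
  have huS : u ∈ S := inS₁ hS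
  have hvS : v ∈ S := inS₂ hS
  have hwS : w ∈ S := inS₃ hS
  rcases memS hS hsq with h | h | h
  · exfalso
    have e1 : (u*v) * (u*v) = u⁻¹ := by
      have h' := congrArg Inv.inv h
      rwa [mul_inv_rev, inv_inv] at h'
    have hxz : u ∈ Subgroup.zpowers (u*v) :=
      ⟨(-2:ℤ), by show (u*v) ^ (-2:ℤ) = u; rw [zpow_neg, zpow_two, e1, inv_inv]⟩
    have hyz : v ∈ Subgroup.zpowers (u*v) :=
      ⟨(3:ℤ), by
        show (u*v) ^ (3:ℤ) = v
        rw [show (3:ℤ) = 2+1 by norm_num, zpow_add, zpow_two, zpow_one, e1]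
        group⟩
    exact hnc (comm_of_isCyclic (cyclic_of_pair2 (hgtop u huS v hvS huv) hxz hyz))
  · exfalso
    have e1 : (u*v) * (u*v) = v⁻¹ := by
      have h' := congrArg Inv.inv h
      rwa [mul_inv_rev, inv_inv] at h'
    have hyz : v ∈ Subgroup.zpowers (u*v) :=
      ⟨(-2:ℤ), by show (u*v) ^ (-2:ℤ) = v; rw [zpow_neg, zpow_two, e1, inv_inv]⟩
    have hxz : u ∈ Subgroup.zpowers (u*v) :=
      ⟨(3:ℤ), by
        show (u*v) ^ (3:ℤ) = u
        rw [show (3:ℤ) = 1+2 by norm_num, zpow_add, zpow_one, zpow_two, e1]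
        group⟩
    exact hnc (comm_of_isCyclic (cyclic_of_pair2 (hgtop u huS v hvS huv) hxz hyz))
  · refine ⟨h, ?_⟩
    have h6 : ((u*v)⁻¹) ^ (6:ℕ) = 1 := by
      rw [show (6:ℕ) = 2*3 from rfl, pow_mul, pow_two, h,
        show w ^ (3:ℕ) = w*w*w from by rw [pow_succ, pow_two], hcw]
    have hd : orderOf ((u*v)⁻¹) ∣ 6 := orderOf_dvd_of_pow_eq_one h6
    have hp := pow_orderOf_eq_one ((u*v)⁻¹)
    set d := orderOf ((u*v)⁻¹) with hdf
    have hpos : 0 < d := orderOf_pos _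
    have hle : d ≤ 6 := Nat.le_of_dvd (by norm_num) hd
    interval_cases d
    · exfalso
      have h1 : (u*v)⁻¹ = 1 := by simpa using hp
      exact hT (h1 ▸ h1T)
    · exfalso
      have h2 : (u*v)⁻¹ * (u*v)⁻¹ = 1 := by rw [← pow_two]; exact hp
      exact hne1 w hwS (by rw [← h, h2])
    · exfalso
      have h3 : ((u*v)⁻¹) ^ (3:ℕ) = 1 := hp
      have h4 : (u*v)⁻¹ = w * w := by
        calc (u*v)⁻¹ = (u*v)⁻¹ * ((u*v)⁻¹) ^ (3:ℕ) := by rw [h3, mul_one]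
          _ = ((u*v)⁻¹ * (u*v)⁻¹) * ((u*v)⁻¹ * (u*v)⁻¹) := by
              rw [pow_succ, pow_two]; group
          _ = w * w := by rw [h]
      exact hT (h4 ▸ hwwT)
    · exact absurd hd (by norm_num)
    · exact absurd hd (by norm_num)
    · rfl

/-- Case A: a full pair of live candidates forces the group to be abelian. -/
lemma fullPairA
    (hgtop : ∀ p ∈ S, ∀ q ∈ S, p ≠ q → Subgroup.closure ({p, q} : Set G) = ⊤)
    (hnc : ¬ ∀ p q : G, p * q = q * p)
    (u v w : G) (hS : S = {u, v, w}) (huv : u ≠ v) (huw : u ≠ w)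
    (h1 : (u*v)⁻¹ * (u*v)⁻¹ = w) (h2 : (v*u)⁻¹ * (v*u)⁻¹ = w) : False := by
  have huS : u ∈ S := inS₁ hS
  have hvS : v ∈ S := inS₂ hS
  have hwS : w ∈ S := inS₃ hS
  have e1 : (u*v) * (u*v) = w⁻¹ := by
    have h' := congrArg Inv.inv h1
    rwa [mul_inv_rev, inv_inv] at h'
  have e2 : (v*u) * (v*u) = w⁻¹ := by
    have h' := congrArg Inv.inv h2
    rwa [mul_inv_rev, inv_inv] at h'
  have c1 : u * w⁻¹ * u⁻¹ = w⁻¹ := by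
    nth_rewrite 1 [← e2]
    rw [← e1]; group
  have hc1 : u * w = w * u := by
    have hcc : u * w⁻¹ = w⁻¹ * u := by
      have h3 := congrArg (· * u) c1
      simpa [mul_assoc] using h3
    have : Commute u w⁻¹ := hcc
    exact (Commute.inv_right_iff.mp this).eq
  have c2 : v * w⁻¹ * v⁻¹ = w⁻¹ := by
    nth_rewrite 1 [← e1]
    rw [← e2]; group
  have hc2 : v * w = w * v := by
    have hcc : v * w⁻¹ = w⁻¹ * v := by
      have h3 := congrArg (· * v) c2
      simpa [mul_assoc] using h3
    have : Commute v w⁻¹ := hcc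
    exact (Commute.inv_right_iff.mp this).eq
  have step1 : ∀ g : G, w * g = g * w := by
    intro g
    have hle : (⊤ : Subgroup G) ≤ Subgroup.centralizer {w} := by
      rw [← hgtop u huS v hvS huv]
      refine (Subgroup.closure_le _).mpr ?_
      intro t ht
      rw [Set.mem_insert_iff, Set.mem_singleton_iff] at ht
      rcases ht with rfl | rfl
      · refine Subgroup.mem_centralizer_iff.mpr ?_
        intro h hh
        rw [Set.mem_singleton_iff] at hh; subst hh
        exact hc1.symm
      · refine Subgroup.mem_centralizer_iff.mpr ?_
        intro h hh
        rw [Set.mem_singleton_iff] at hh; subst hh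
        exact hc2.symm
    exact Subgroup.mem_centralizer_iff.mp (hle (Subgroup.mem_top g)) w (Set.mem_singleton w)
  have step2 : ∀ g : G, u * g = g * u := by
    intro g
    have hle : (⊤ : Subgroup G) ≤ Subgroup.centralizer {u} := by
      rw [← hgtop u huS w hwS huw]
      refine (Subgroup.closure_le _).mpr ?_
      intro t ht
      rw [Set.mem_insert_iff, Set.mem_singleton_iff] at ht
      rcases ht with rfl | rfl
      · refine Subgroup.mem_centralizer_iff.mpr ?_
        intro h hh
        rw [Set.mem_singleton_iff] at hh; subst hh
        rfl
      · refine Subgroup.mem_centralizer_iff.mpr ?_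
        intro h hh
        rw [Set.mem_singleton_iff] at hh; subst hh
        exact hc1
    exact Subgroup.mem_centralizer_iff.mp (hle (Subgroup.mem_top g)) u (Set.mem_singleton u)
  refine hnc ?_
  intro p q
  have hle : (⊤ : Subgroup G) ≤ Subgroup.centralizer {p} := by
    rw [← hgtop u huS w hwS huw]
    refine (Subgroup.closure_le _).mpr ?_
    intro t ht
    rw [Set.mem_insert_iff, Set.mem_singleton_iff] at ht
    rcases ht with rfl | rfl
    · refine Subgroup.mem_centralizer_iff.mpr ?_
      intro h hh
      rw [Set.mem_singleton_iff] at hh; subst hh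
      exact (step2 h).symm
    · refine Subgroup.mem_centralizer_iff.mpr ?_
      intro h hh
      rw [Set.mem_singleton_iff] at hh; subst hh
      exact (step1 h).symm
  exact Subgroup.mem_centralizer_iff.mp (hle (Subgroup.mem_top q)) p (Set.mem_singleton p)

/-- Case A : all three elements have order 3. -/
lemma caseA
    (hcov : ∀ g : G, g ∈ S ∨ g = 1 ∨ (∃ u ∈ S, ∃ v ∈ S, u * v = g) ∨
      (∃ u ∈ S, ∃ v ∈ S, g * u = v) ∨ (∃ u ∈ S, ∃ v ∈ S, u * g = v) ∨ g * g ∈ S)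
    (hne1 : ∀ s ∈ S, s ≠ (1:G))
    (hsq1 : ∀ s ∈ S, s * s ≠ 1)
    (hgtop : ∀ p ∈ S, ∀ q ∈ S, p ≠ q → Subgroup.closure ({p, q} : Set G) = ⊤)
    (hnc : ¬ ∀ p q : G, p * q = q * p)
    (x y z : G) (hS : S = {x, y, z}) (hxy : x ≠ y) (hxz : x ≠ z) (hyz : y ≠ z)
    (hcx : x*x*x = 1) (hcy : y*y*y = 1) (hcz : z*z*z = 1) : Nat.card G ≤ 24 := by
  by_contra hgt
  push_neg at hgt
  have struct := coverStruct hcov hsq1 hgtop hnc x y z hS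
  have hxS : x ∈ S := inS₁ hS
  have hyS : y ∈ S := inS₂ hS
  have hzS : z ∈ S := inS₃ hS
  have hdx : (x*x)⁻¹ = x := inv_eq_of_mul_eq_one_right hcx
  have hdy : (y*y)⁻¹ = y := inv_eq_of_mul_eq_one_right hcy
  have hdz : (z*z)⁻¹ = z := inv_eq_of_mul_eq_one_right hcz
  have h31 : Nat.card G ≤ 31 := by
    have hl := card_le_of_list
      (TL x y z ++ [(x*y)⁻¹, (y*x)⁻¹, (y*z)⁻¹, (z*y)⁻¹, (z*x)⁻¹, (x*z)⁻¹]) ?_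
    · simpa [TL] using hl
    intro g
    rcases struct g with hg | ⟨hT, hsq, u, hu, v, hv, rfl⟩
    · exact List.mem_append_left _ hg
    rcases memS hS hu with h1|h1|h1 <;> rcases memS hS hv with h2|h2|h2 <;>
        rw [h1, h2] at hT hsq ⊢
    · exact List.mem_append_left _ (by rw [hdx]; exact memTL_self hS x hxS)
    · exact List.mem_append_right _ (by simp)
    · exact List.mem_append_right _ (by simp)
    · exact List.mem_append_right _ (by simp)
    · exact List.mem_append_left _ (by rw [hdy]; exact memTL_self hS y hyS)
    · exact List.mem_append_right _ (by simp)
    · exact List.mem_append_right _ (by simp)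
    · exact List.mem_append_right _ (by simp)
    · exact List.mem_append_left _ (by rw [hdz]; exact memTL_self hS z hzS)
  have h26 : 26 ≤ Nat.card G := by
    rcases Nat.lt_or_ge (Nat.card G) 26 with hlt | hge
    · exfalso
      have h25 : Nat.card G = 25 := by omega
      have : Fact (Nat.Prime 5) := ⟨by norm_num⟩
      exact hnc (IsPGroup.commutative_of_card_eq_prime_sq (p := 5) (by rw [h25]; norm_num))
    · exact hge
  by_cases hF1 : ((x*y)⁻¹ ∉ TL x y z ∧ (x*y)⁻¹ * (x*y)⁻¹ ∈ S) ∧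
      ((y*x)⁻¹ ∉ TL x y z ∧ (y*x)⁻¹ * (y*x)⁻¹ ∈ S)
  · obtain ⟨⟨hT1, hs1⟩, hT2, hs2⟩ := hF1
    have a1 := aliveA hne1 hgtop hnc x y z hS hxy hcz (TL x y z) (memTL_one x y z)
      (memTL_mul hS z hzS z hzS) hT1 hs1
    have a2 := aliveA hne1 hgtop hnc y x z (swapS hS) (Ne.symm hxy) hcz (TL x y z)
      (memTL_one x y z) (memTL_mul hS z hzS z hzS) hT2 hs2
    exact fullPairA hgtop hnc x y z hS hxy hxz a1.1 a2.1
  by_cases hF2 : ((y*z)⁻¹ ∉ TL x y z ∧ (y*z)⁻¹ * (y*z)⁻¹ ∈ S) ∧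
      ((z*y)⁻¹ ∉ TL x y z ∧ (z*y)⁻¹ * (z*y)⁻¹ ∈ S)
  · obtain ⟨⟨hT1, hs1⟩, hT2, hs2⟩ := hF2
    have a1 := aliveA hne1 hgtop hnc y z x (rotS hS) hyz hcx (TL x y z) (memTL_one x y z)
      (memTL_mul hS x hxS x hxS) hT1 hs1
    have a2 := aliveA hne1 hgtop hnc z y x (swapS (rotS hS)) (Ne.symm hyz) hcx (TL x y z)
      (memTL_one x y z) (memTL_mul hS x hxS x hxS) hT2 hs2
    exact fullPairA hgtop hnc y z x (rotS hS) hyz (Ne.symm hxy) a1.1 a2.1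
  by_cases hF3 : ((z*x)⁻¹ ∉ TL x y z ∧ (z*x)⁻¹ * (z*x)⁻¹ ∈ S) ∧
      ((x*z)⁻¹ ∉ TL x y z ∧ (x*z)⁻¹ * (x*z)⁻¹ ∈ S)
  · obtain ⟨⟨hT1, hs1⟩, hT2, hs2⟩ := hF3
    have a1 := aliveA hne1 hgtop hnc z x y (rotS (rotS hS)) (Ne.symm hxz) hcy (TL x y z)
      (memTL_one x y z) (memTL_mul hS y hyS y hyS) hT1 hs1
    have a2 := aliveA hne1 hgtop hnc x z y (swapS (rotS (rotS hS))) hxz hcy (TL x y z)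
      (memTL_one x y z) (memTL_mul hS y hyS y hyS) hT2 hs2
    exact fullPairA hgtop hnc z x y (rotS (rotS hS)) (Ne.symm hxz) (Ne.symm hyz) a1.1 a2.1
  have cover3 : ∀ q1 q2 q3 : G, (∀ g : G, g ∈ TL x y z ∨ g = q1 ∨ g = q2 ∨ g = q3) →
      Nat.card G ≤ 28 := by
    intro q1 q2 q3 hcv
    have hl := card_le_of_list (TL x y z ++ [q1, q2, q3]) ?_
    · simpa [TL] using hl
    intro g
    rcases hcv g with h|h|h|h
    · exact List.mem_append_left _ h
    · rw [h]; exact List.mem_append_right _ (by simp)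
    · rw [h]; exact List.mem_append_right _ (by simp)
    · rw [h]; exact List.mem_append_right _ (by simp)
  have h28 : Nat.card G ≤ 28 := by
    rcases not_and_or.mp hF1 with d1|d1 <;> rcases not_and_or.mp hF2 with d2|d2 <;>
      rcases not_and_or.mp hF3 with d3|d3
    · refine cover3 (y*x)⁻¹ (z*y)⁻¹ (x*z)⁻¹ (fun g => ?_)
      rcases struct g with hg | ⟨hT, hsq, u, hu, v, hv, rfl⟩
      · exact Or.inl hg
      rcases memS hS hu with h1|h1|h1 <;> rcases memS hS hv with h2|h2|h2 <;>
          rw [h1, h2] at hT hsq ⊢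
      · exact Or.inl (by rw [hdx]; exact memTL_self hS x hxS)
      · exact absurd ⟨hT, hsq⟩ d1
      · exact Or.inr (Or.inr (Or.inr rfl))
      · exact Or.inr (Or.inl rfl)
      · exact Or.inl (by rw [hdy]; exact memTL_self hS y hyS)
      · exact absurd ⟨hT, hsq⟩ d2
      · exact absurd ⟨hT, hsq⟩ d3
      · exact Or.inr (Or.inr (Or.inl rfl))
      · exact Or.inl (by rw [hdz]; exact memTL_self hS z hzS)
    · refine cover3 (y*x)⁻¹ (z*y)⁻¹ (z*x)⁻¹ (fun g => ?_)
      rcases struct g with hg | ⟨hT, hsq, u, hu, v, hv, rfl⟩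
      · exact Or.inl hg
      rcases memS hS hu with h1|h1|h1 <;> rcases memS hS hv with h2|h2|h2 <;>
          rw [h1, h2] at hT hsq ⊢
      · exact Or.inl (by rw [hdx]; exact memTL_self hS x hxS)
      · exact absurd ⟨hT, hsq⟩ d1
      · exact absurd ⟨hT, hsq⟩ d3
      · exact Or.inr (Or.inl rfl)
      · exact Or.inl (by rw [hdy]; exact memTL_self hS y hyS)
      · exact absurd ⟨hT, hsq⟩ d2
      · exact Or.inr (Or.inr (Or.inr rfl))
      · exact Or.inr (Or.inr (Or.inl rfl))
      · exact Or.inl (by rw [hdz]; exact memTL_self hS z hzS)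
    · refine cover3 (y*x)⁻¹ (y*z)⁻¹ (x*z)⁻¹ (fun g => ?_)
      rcases struct g with hg | ⟨hT, hsq, u, hu, v, hv, rfl⟩
      · exact Or.inl hg
      rcases memS hS hu with h1|h1|h1 <;> rcases memS hS hv with h2|h2|h2 <;>
          rw [h1, h2] at hT hsq ⊢
      · exact Or.inl (by rw [hdx]; exact memTL_self hS x hxS)
      · exact absurd ⟨hT, hsq⟩ d1
      · exact Or.inr (Or.inr (Or.inr rfl))
      · exact Or.inr (Or.inl rfl)
      · exact Or.inl (by rw [hdy]; exact memTL_self hS y hyS)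
      · exact Or.inr (Or.inr (Or.inl rfl))
      · exact absurd ⟨hT, hsq⟩ d3
      · exact absurd ⟨hT, hsq⟩ d2
      · exact Or.inl (by rw [hdz]; exact memTL_self hS z hzS)
    · refine cover3 (y*x)⁻¹ (y*z)⁻¹ (z*x)⁻¹ (fun g => ?_)
      rcases struct g with hg | ⟨hT, hsq, u, hu, v, hv, rfl⟩
      · exact Or.inl hg
      rcases memS hS hu with h1|h1|h1 <;> rcases memS hS hv with h2|h2|h2 <;>
          rw [h1, h2] at hT hsq ⊢
      · exact Or.inl (by rw [hdx]; exact memTL_self hS x hxS)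
      · exact absurd ⟨hT, hsq⟩ d1
      · exact absurd ⟨hT, hsq⟩ d3
      · exact Or.inr (Or.inl rfl)
      · exact Or.inl (by rw [hdy]; exact memTL_self hS y hyS)
      · exact Or.inr (Or.inr (Or.inl rfl))
      · exact Or.inr (Or.inr (Or.inr rfl))
      · exact absurd ⟨hT, hsq⟩ d2
      · exact Or.inl (by rw [hdz]; exact memTL_self hS z hzS)
    · refine cover3 (x*y)⁻¹ (z*y)⁻¹ (x*z)⁻¹ (fun g => ?_)
      rcases struct g with hg | ⟨hT, hsq, u, hu, v, hv, rfl⟩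
      · exact Or.inl hg
      rcases memS hS hu with h1|h1|h1 <;> rcases memS hS hv with h2|h2|h2 <;>
          rw [h1, h2] at hT hsq ⊢
      · exact Or.inl (by rw [hdx]; exact memTL_self hS x hxS)
      · exact Or.inr (Or.inl rfl)
      · exact Or.inr (Or.inr (Or.inr rfl))
      · exact absurd ⟨hT, hsq⟩ d1
      · exact Or.inl (by rw [hdy]; exact memTL_self hS y hyS)
      · exact absurd ⟨hT, hsq⟩ d2
      · exact absurd ⟨hT, hsq⟩ d3
      · exact Or.inr (Or.inr (Or.inl rfl))
      · exact Or.inl (by rw [hdz]; exact memTL_self hS z hzS)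
    · refine cover3 (x*y)⁻¹ (z*y)⁻¹ (z*x)⁻¹ (fun g => ?_)
      rcases struct g with hg | ⟨hT, hsq, u, hu, v, hv, rfl⟩
      · exact Or.inl hg
      rcases memS hS hu with h1|h1|h1 <;> rcases memS hS hv with h2|h2|h2 <;>
          rw [h1, h2] at hT hsq ⊢
      · exact Or.inl (by rw [hdx]; exact memTL_self hS x hxS)
      · exact Or.inr (Or.inl rfl)
      · exact absurd ⟨hT, hsq⟩ d3
      · exact absurd ⟨hT, hsq⟩ d1
      · exact Or.inl (by rw [hdy]; exact memTL_self hS y hyS)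
      · exact absurd ⟨hT, hsq⟩ d2
      · exact Or.inr (Or.inr (Or.inr rfl))
      · exact Or.inr (Or.inr (Or.inl rfl))
      · exact Or.inl (by rw [hdz]; exact memTL_self hS z hzS)
    · refine cover3 (x*y)⁻¹ (y*z)⁻¹ (x*z)⁻¹ (fun g => ?_)
      rcases struct g with hg | ⟨hT, hsq, u, hu, v, hv, rfl⟩
      · exact Or.inl hg
      rcases memS hS hu with h1|h1|h1 <;> rcases memS hS hv with h2|h2|h2 <;>
          rw [h1, h2] at hT hsq ⊢
      · exact Or.inl (by rw [hdx]; exact memTL_self hS x hxS)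
      · exact Or.inr (Or.inl rfl)
      · exact Or.inr (Or.inr (Or.inr rfl))
      · exact absurd ⟨hT, hsq⟩ d1
      · exact Or.inl (by rw [hdy]; exact memTL_self hS y hyS)
      · exact Or.inr (Or.inr (Or.inl rfl))
      · exact absurd ⟨hT, hsq⟩ d3
      · exact absurd ⟨hT, hsq⟩ d2
      · exact Or.inl (by rw [hdz]; exact memTL_self hS z hzS)
    · refine cover3 (x*y)⁻¹ (y*z)⁻¹ (z*x)⁻¹ (fun g => ?_)
      rcases struct g with hg | ⟨hT, hsq, u, hu, v, hv, rfl⟩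
      · exact Or.inl hg
      rcases memS hS hu with h1|h1|h1 <;> rcases memS hS hv with h2|h2|h2 <;>
          rw [h1, h2] at hT hsq ⊢
      · exact Or.inl (by rw [hdx]; exact memTL_self hS x hxS)
      · exact Or.inr (Or.inl rfl)
      · exact absurd ⟨hT, hsq⟩ d3
      · exact absurd ⟨hT, hsq⟩ d1
      · exact Or.inl (by rw [hdy]; exact memTL_self hS y hyS)
      · exact Or.inr (Or.inr (Or.inl rfl))
      · exact Or.inr (Or.inr (Or.inr rfl))
      · exact absurd ⟨hT, hsq⟩ d2
      · exact Or.inl (by rw [hdz]; exact memTL_self hS z hzS)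
  have h25 : Nat.card G ≤ 25 := by
    have hl := card_le_of_list (TL x y z) ?_
    · simpa [TL] using hl
    intro g
    rcases struct g with hg | ⟨hT, hsq, u, hu, v, hv, rfl⟩
    · exact hg
    exfalso
    rcases memS hS hu with h1|h1|h1 <;> rcases memS hS hv with h2|h2|h2 <;>
        rw [h1, h2] at hT hsq
    · exact hT (by rw [hdx]; exact memTL_self hS x hxS)
    · have h6d := (aliveA hne1 hgtop hnc x y z hS hxy hcz (TL x y z) (memTL_one x y z)
        (memTL_mul hS z hzS z hzS) hT hsq).2
      have h6 : (6:ℕ) ∣ Nat.card G := by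
        rw [Nat.card_eq_fintype_card, ← h6d]; exact orderOf_dvd_card
      omega
    · have h6d := (aliveA hne1 hgtop hnc x z y (swapS (rotS (rotS hS))) hxz hcy (TL x y z) (memTL_one x y z)
        (memTL_mul hS y hyS y hyS) hT hsq).2
      have h6 : (6:ℕ) ∣ Nat.card G := by
        rw [Nat.card_eq_fintype_card, ← h6d]; exact orderOf_dvd_card
      omega
    · have h6d := (aliveA hne1 hgtop hnc y x z (swapS hS) (Ne.symm hxy) hcz (TL x y z) (memTL_one x y z)
        (memTL_mul hS z hzS z hzS) hT hsq).2
      have h6 : (6:ℕ) ∣ Nat.card G := by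
        rw [Nat.card_eq_fintype_card, ← h6d]; exact orderOf_dvd_card
      omega
    · exact hT (by rw [hdy]; exact memTL_self hS y hyS)
    · have h6d := (aliveA hne1 hgtop hnc y z x (rotS hS) hyz hcx (TL x y z) (memTL_one x y z)
        (memTL_mul hS x hxS x hxS) hT hsq).2
      have h6 : (6:ℕ) ∣ Nat.card G := by
        rw [Nat.card_eq_fintype_card, ← h6d]; exact orderOf_dvd_card
      omega
    · have h6d := (aliveA hne1 hgtop hnc z x y (rotS (rotS hS)) (Ne.symm hxz) hcy (TL x y z) (memTL_one x y z)
        (memTL_mul hS y hyS y hyS) hT hsq).2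
      have h6 : (6:ℕ) ∣ Nat.card G := by
        rw [Nat.card_eq_fintype_card, ← h6d]; exact orderOf_dvd_card
      omega
    · have h6d := (aliveA hne1 hgtop hnc z y x (swapS (rotS hS)) (Ne.symm hyz) hcx (TL x y z) (memTL_one x y z)
        (memTL_mul hS x hxS x hxS) hT hsq).2
      have h6 : (6:ℕ) ∣ Nat.card G := by
        rw [Nat.card_eq_fintype_card, ← h6d]; exact orderOf_dvd_card
      omega
    · exact hT (by rw [hdz]; exact memTL_self hS z hzS)
  omega

/-- square-root fiber bound in a cyclic group -/
lemma sqfiber [DecidableEq G] (hcyc : IsCyclic G) (hcomm : ∀ p q : G, p * q = q * p) (s : G) :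
    (Finset.univ.filter fun g : G => g * g = s).card ≤ 2 := by
  classical
  by_cases hne : (Finset.univ.filter fun g : G => g * g = s).Nonempty
  · obtain ⟨g₀, hg₀⟩ := hne
    have hg₀' : g₀ * g₀ = s := (Finset.mem_filter.mp hg₀).2
    have hcard : (Finset.univ.filter fun g : G => g * g = s).card ≤
        (Finset.univ.filter fun h : G => h ^ 2 = 1).card := by
      apply Finset.card_le_card_of_injOn (fun g => g * g₀⁻¹)
      · intro g hg
        have hg' : g * g = s := (Finset.mem_filter.mp hg).2
        refine Finset.mem_filter.mpr ⟨Finset.mem_univ _, ?_⟩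
        rw [pow_two]
        calc (g * g₀⁻¹) * (g * g₀⁻¹) = g * (g₀⁻¹ * g) * g₀⁻¹ := by group
          _ = g * (g * g₀⁻¹) * g₀⁻¹ := by rw [hcomm g₀⁻¹ g]
          _ = (g * g) * (g₀ * g₀)⁻¹ := by rw [mul_inv_rev]; group
          _ = s * s⁻¹ := by rw [hg', hg₀']
          _ = 1 := by simp
      · intro p _ q _ hpq
        exact mul_right_cancel hpq
    have hle := IsCyclic.card_pow_eq_one_le (α := G) (n := 2) (by norm_num)
    calc (Finset.univ.filter fun g : G => g * g = s).card
        ≤ (Finset.univ.filter fun h : G => h ^ 2 = 1).card := hcard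
      _ ≤ 2 := by
          refine le_trans (Finset.card_le_card ?_) hle
          intro h hh
          simpa using (Finset.mem_filter.mp hh).2
  · rw [Finset.not_nonempty_iff_eq_empty] at hne
    rw [hne]; simp

def ALS {G : Type*} [Group G] (x y z : G) : List G :=
  [1, x, y, z, x*x, x*y, x*z, y*y, y*z, z*z, x*y⁻¹, y*x⁻¹, x*z⁻¹, z*x⁻¹, y*z⁻¹, z*y⁻¹]

lemma abelianCase
    (hcov : ∀ g : G, g ∈ S ∨ g = 1 ∨ (∃ u ∈ S, ∃ v ∈ S, u * v = g) ∨
      (∃ u ∈ S, ∃ v ∈ S, g * u = v) ∨ (∃ u ∈ S, ∃ v ∈ S, u * g = v) ∨ g * g ∈ S)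
    (hne1 : ∀ s ∈ S, s ≠ (1:G))
    (hsq1 : ∀ s ∈ S, s * s ≠ 1)
    (hgtop : ∀ p ∈ S, ∀ q ∈ S, p ≠ q → Subgroup.closure ({p, q} : Set G) = ⊤)
    (hcomm : ∀ p q : G, p * q = q * p)
    (x y z : G) (hS : S = {x, y, z}) (hxy : x ≠ y) (hxz : x ≠ z) (hyz : y ≠ z) :
    Nat.card G ≤ 24 := by
  classical
  have hmemA : ∀ u ∈ S, ∀ v ∈ S, u * v ∈ ALS x y z := by
    intro u hu v hv
    rcases memS hS hu with rfl|rfl|rfl <;> rcases memS hS hv with rfl|rfl|rfl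
    · simp [ALS]
    · simp [ALS]
    · simp [ALS]
    · rw [hcomm]; simp [ALS]
    · simp [ALS]
    · simp [ALS]
    · rw [hcomm]; simp [ALS]
    · rw [hcomm]; simp [ALS]
    · simp [ALS]
  have hmemB : ∀ u ∈ S, ∀ v ∈ S, u * v⁻¹ ∈ ALS x y z := by
    intro u hu v hv
    rcases memS hS hu with rfl|rfl|rfl <;> rcases memS hS hv with rfl|rfl|rfl <;> simp [ALS]
  have hmemC : ∀ u ∈ S, ∀ v ∈ S, u⁻¹ * v ∈ ALS x y z := by
    intro u hu v hv
    rw [hcomm]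
    exact hmemB v hv u hu
  have hmemS : ∀ u ∈ S, u ∈ ALS x y z := by
    intro u hu
    rcases memS hS hu with rfl|rfl|rfl <;> simp [ALS]
  by_cases hcyc : IsCyclic G
  · -- cyclic case: 16 + 6
    have hcover : (Finset.univ : Finset G) ⊆
        (ALS x y z).toFinset ∪ (Finset.univ.filter fun g : G => g * g ∈ S) := by
      intro g _
      rcases hcov g with hg | hg | ⟨u, hu, v, hv, heq⟩ | ⟨u, hu, v, hv, heq⟩ | ⟨u, hu, v, hv, heq⟩ | hg
      · exact Finset.mem_union_left _ (List.mem_toFinset.mpr (hmemS g hg))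
      · subst hg; exact Finset.mem_union_left _ (List.mem_toFinset.mpr (by simp [ALS]))
      · subst heq; exact Finset.mem_union_left _ (List.mem_toFinset.mpr (hmemA u hu v hv))
      · have hgv : g = v * u⁻¹ := eq_mul_inv_of_mul_eq heq
        subst hgv
        exact Finset.mem_union_left _ (List.mem_toFinset.mpr (hmemB v hv u hu))
      · have hgv : g = u⁻¹ * v := eq_inv_mul_of_mul_eq heq
        subst hgv
        exact Finset.mem_union_left _ (List.mem_toFinset.mpr (hmemC u hu v hv))
      · exact Finset.mem_union_right _ (Finset.mem_filter.mpr ⟨Finset.mem_univ _, hg⟩)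
    have hsq6 : (Finset.univ.filter fun g : G => g * g ∈ S).card ≤ 6 := by
      have hsub : (Finset.univ.filter fun g : G => g * g ∈ S) ⊆
          ((Finset.univ.filter fun g : G => g * g = x) ∪
           (Finset.univ.filter fun g : G => g * g = y)) ∪
           (Finset.univ.filter fun g : G => g * g = z) := by
        intro g hg
        have := (Finset.mem_filter.mp hg).2
        rcases memS hS this with h|h|h
        · exact Finset.mem_union_left _ (Finset.mem_union_left _
            (Finset.mem_filter.mpr ⟨Finset.mem_univ _, h⟩))
        · exact Finset.mem_union_left _ (Finset.mem_union_right _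
            (Finset.mem_filter.mpr ⟨Finset.mem_univ _, h⟩))
        · exact Finset.mem_union_right _ (Finset.mem_filter.mpr ⟨Finset.mem_univ _, h⟩)
      calc (Finset.univ.filter fun g : G => g * g ∈ S).card
          ≤ _ := Finset.card_le_card hsub
        _ ≤ ((Finset.univ.filter fun g : G => g * g = x) ∪
             (Finset.univ.filter fun g : G => g * g = y)).card +
            (Finset.univ.filter fun g : G => g * g = z).card := Finset.card_union_le _ _
        _ ≤ ((Finset.univ.filter fun g : G => g * g = x).card +
             (Finset.univ.filter fun g : G => g * g = y).card) +
            (Finset.univ.filter fun g : G => g * g = z).card :=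
              add_le_add (Finset.card_union_le _ _) le_rfl
        _ ≤ 2 + 2 + 2 :=
              add_le_add (add_le_add (sqfiber hcyc hcomm x) (sqfiber hcyc hcomm y))
                (sqfiber hcyc hcomm z)
        _ = 6 := rfl
    calc Nat.card G = (Finset.univ : Finset G).card := by
          rw [Nat.card_eq_fintype_card, Finset.card_univ]
      _ ≤ ((ALS x y z).toFinset ∪ (Finset.univ.filter fun g : G => g * g ∈ S)).card :=
          Finset.card_le_card hcover
      _ ≤ (ALS x y z).toFinset.card + (Finset.univ.filter fun g : G => g * g ∈ S).card :=
          Finset.card_union_le _ _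
      _ ≤ 16 + 6 :=
          add_le_add (le_trans (List.toFinset_card_le _) (by simp [ALS])) hsq6
      _ ≤ 24 := by norm_num
  · -- non-cyclic abelian: explicit list of 22
    have kill : ∀ s ∈ S, ∀ t ∈ S, t ≠ s → t ∈ Subgroup.zpowers s → False := by
      intro s hs t ht hne hz
      exact hcyc (cyclic_of_pair (hgtop s hs t ht (Ne.symm hne)) hz)
    have hl := card_le_of_list
      (ALS x y z ++ [x⁻¹*x⁻¹, x⁻¹*y⁻¹, x⁻¹*z⁻¹, y⁻¹*y⁻¹, y⁻¹*z⁻¹, z⁻¹*z⁻¹]) ?_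
    · calc Nat.card G ≤ _ := hl
        _ ≤ 24 := by simp [ALS]
    intro g
    rcases hcov g with hg | hg | ⟨u, hu, v, hv, heq⟩ | ⟨u, hu, v, hv, heq⟩ | ⟨u, hu, v, hv, heq⟩ | hg
    · exact List.mem_append_left _ (hmemS g hg)
    · subst hg; exact List.mem_append_left _ (by simp [ALS])
    · subst heq; exact List.mem_append_left _ (hmemA u hu v hv)
    · have hgv : g = v * u⁻¹ := eq_mul_inv_of_mul_eq heq
      subst hgv
      exact List.mem_append_left _ (hmemB v hv u hu)
    · have hgv : g = u⁻¹ * v := eq_inv_mul_of_mul_eq heq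
      subst hgv
      exact List.mem_append_left _ (hmemC u hu v hv)
    · -- g*g ∈ S : analyse g⁻¹
      rcases hcov g⁻¹ with h2 | h2 | ⟨u, hu, v, hv, heq⟩ | ⟨u, hu, v, hv, heq⟩ | ⟨u, hu, v, hv, heq⟩ | h2
      · -- g⁻¹ ∈ S
        by_cases hts : g * g = g⁻¹
        · have h3 : g⁻¹ * g⁻¹ = g := by
            rw [← mul_inv_rev, hts, inv_inv]
          exact List.mem_append_left _ (h3 ▸ hmemA g⁻¹ h2 g⁻¹ h2)
        · exact (kill g⁻¹ h2 (g*g) hg hts ⟨(-2 : ℤ), by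
            show g⁻¹ ^ (-2 : ℤ) = g * g
            rw [zpow_neg, ← inv_zpow, inv_inv, zpow_two]⟩).elim
      · exact List.mem_append_left _ ((inv_eq_one.mp h2) ▸ (by simp [ALS] : (1:G) ∈ ALS x y z))
      · -- u*v = g⁻¹ : g = v⁻¹ * u⁻¹
        have hgv : g = v⁻¹ * u⁻¹ := by
          have h0 := congrArg Inv.inv heq
          rw [mul_inv_rev, inv_inv] at h0
          exact h0.symm
        subst hgv
        rcases memS hS hu with h1|h1|h1 <;> rcases memS hS hv with h2|h2|h2 <;> rw [h1, h2]
        · exact List.mem_append_right _ (by simp)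
        · rw [hcomm y⁻¹ x⁻¹]; exact List.mem_append_right _ (by simp)
        · rw [hcomm z⁻¹ x⁻¹]; exact List.mem_append_right _ (by simp)
        · exact List.mem_append_right _ (by simp)
        · exact List.mem_append_right _ (by simp)
        · rw [hcomm z⁻¹ y⁻¹]; exact List.mem_append_right _ (by simp)
        · exact List.mem_append_right _ (by simp)
        · exact List.mem_append_right _ (by simp)
        · exact List.mem_append_right _ (by simp)
      · -- g⁻¹ * u = v : g = u * v⁻¹
        have hgv : g = u * v⁻¹ := by
          have h0 : g⁻¹ = v * u⁻¹ := eq_mul_inv_of_mul_eq heq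
          have h1 := congrArg Inv.inv h0
          rwa [inv_inv, mul_inv_rev, inv_inv] at h1
        subst hgv
        exact List.mem_append_left _ (hmemB u hu v hv)
      · -- u * g⁻¹ = v : g = v⁻¹ * u
        have hgv : g = v⁻¹ * u := by
          have h0 : g⁻¹ = u⁻¹ * v := eq_inv_mul_of_mul_eq heq
          have h1 := congrArg Inv.inv h0
          rwa [inv_inv, mul_inv_rev, inv_inv] at h1
        subst hgv
        rw [hcomm v⁻¹ u]
        exact List.mem_append_left _ (hmemB u hu v hv)
      · -- double square root
        by_cases hts : g⁻¹ * g⁻¹ = g * g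
        · exact (hsq1 _ hg (by nth_rewrite 2 [← hts]; group)).elim
        · exact (kill (g*g) hg (g⁻¹*g⁻¹) h2 hts ⟨(-1 : ℤ), by
            show (g * g) ^ (-1 : ℤ) = g⁻¹ * g⁻¹
            rw [zpow_neg, zpow_one, mul_inv_rev]⟩).elim

/-- Trichotomy: each element of S has cube 1 or some ordering multiplies to 1. -/
lemma tri
    (hpf : ∀ u ∈ S, ∀ v ∈ S, u * v ∉ S)
    (hcov : ∀ g : G, g ∈ S ∨ g = 1 ∨ (∃ u ∈ S, ∃ v ∈ S, u * v = g) ∨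
      (∃ u ∈ S, ∃ v ∈ S, g * u = v) ∨ (∃ u ∈ S, ∃ v ∈ S, u * g = v) ∨ g * g ∈ S)
    (hne1 : ∀ s ∈ S, s ≠ (1:G))
    (hsq1 : ∀ s ∈ S, s * s ≠ 1)
    (hgtop : ∀ p ∈ S, ∀ q ∈ S, p ≠ q → Subgroup.closure ({p, q} : Set G) = ⊤)
    (hnc : ¬ ∀ p q : G, p * q = q * p)
    (x y z : G) (hS : S = {x, y, z}) (hxy : x ≠ y) (hxz : x ≠ z) (hyz : y ≠ z) :
    x*x*x = 1 ∨ x*y*z = 1 ∨ x*z*y = 1 := by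
  have hxS : x ∈ S := inS₁ hS
  have hyS : y ∈ S := inS₂ hS
  have hzS : z ∈ S := inS₃ hS
  rcases hcov x⁻¹ with hg | hg | ⟨u, hu, v, hv, heq⟩ | ⟨u, hu, v, hv, heq⟩ | ⟨u, hu, v, hv, heq⟩ | hg
  · rcases memS hS hg with h|h|h
    · exfalso
      refine hsq1 x hxS ?_
      nth_rewrite 2 [← h]
      simp
    · exact (killCyc hgtop hnc hxS hyS (Ne.symm hxy)
        ⟨(-1 : ℤ), by show x ^ (-1:ℤ) = y; rw [zpow_neg, zpow_one]; exact h⟩).elim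
    · exact (killCyc hgtop hnc hxS hzS (Ne.symm hxz)
        ⟨(-1 : ℤ), by show x ^ (-1:ℤ) = z; rw [zpow_neg, zpow_one]; exact h⟩).elim
  · exact absurd (inv_eq_one.mp hg) (hne1 x hxS)
  · rcases memS hS hu with h1|h1|h1 <;> rcases memS hS hv with h2|h2|h2 <;> rw [h1, h2] at heq
    · -- x*x = x⁻¹
      left
      rw [heq]; simp
    · -- x*y = x⁻¹ : y = x⁻¹*x⁻¹
      refine (killCyc hgtop hnc hxS hyS (Ne.symm hxy) ⟨(-2 : ℤ), ?_⟩).elim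
      show x ^ (-2:ℤ) = y
      have hy : y = x⁻¹ * x⁻¹ := by
        have h0 : y = x⁻¹ * (x * y) := by group
        rw [heq] at h0; exact h0
      rw [zpow_neg, zpow_two, mul_inv_rev, ← hy]
    · refine (killCyc hgtop hnc hxS hzS (Ne.symm hxz) ⟨(-2 : ℤ), ?_⟩).elim
      show x ^ (-2:ℤ) = z
      have hy : z = x⁻¹ * x⁻¹ := by
        have h0 : z = x⁻¹ * (x * z) := by group
        rw [heq] at h0; exact h0
      rw [zpow_neg, zpow_two, mul_inv_rev, ← hy]
    · -- y*x = x⁻¹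
      refine (killCyc hgtop hnc hxS hyS (Ne.symm hxy) ⟨(-2 : ℤ), ?_⟩).elim
      show x ^ (-2:ℤ) = y
      have hy : y = x⁻¹ * x⁻¹ := by
        have h0 : y = (y * x) * x⁻¹ * x⁻¹ * x := by group
        rw [heq] at h0
        rw [h0]; group
      rw [zpow_neg, zpow_two, mul_inv_rev, ← hy]
    · -- y*y = x⁻¹ : x = (y*y)⁻¹
      refine (killCyc hgtop hnc hyS hxS hxy ⟨(-2 : ℤ), ?_⟩).elim
      show y ^ (-2:ℤ) = x
      rw [zpow_neg, zpow_two, heq, inv_inv]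
    · -- y*z = x⁻¹
      right; left
      rw [mul_assoc, heq]; simp
    · -- z*x = x⁻¹
      refine (killCyc hgtop hnc hxS hzS (Ne.symm hxz) ⟨(-2 : ℤ), ?_⟩).elim
      show x ^ (-2:ℤ) = z
      have hy : z = x⁻¹ * x⁻¹ := by
        have h0 : z = (z * x) * x⁻¹ * x⁻¹ * x := by group
        rw [heq] at h0
        rw [h0]; group
      rw [zpow_neg, zpow_two, mul_inv_rev, ← hy]
    · -- z*y = x⁻¹
      right; right
      rw [mul_assoc, heq]; simp
    · -- z*z = x⁻¹
      refine (killCyc hgtop hnc hzS hxS hxz ⟨(-2 : ℤ), ?_⟩).elim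
      show z ^ (-2:ℤ) = x
      rw [zpow_neg, zpow_two, heq, inv_inv]
  · -- x⁻¹ * u = v : x * v = u ∈ S, product-freeness violation
    exfalso
    have heq' : x * v = u := by rw [← heq]; group
    exact hpf x hxS v hv (by rw [heq']; exact hu)
  · -- u * x⁻¹ = v : v * x = u ∈ S
    exfalso
    have heq' : v * x = u := by rw [← heq]; group
    exact hpf v hv x hxS (by rw [heq']; exact hu)
  · rcases memS hS hg with h|h|h
    · left
      have h3 : (x*x)*(x⁻¹*x⁻¹) = 1 := by group
      rw [h] at h3
      exact h3
    · exact (killCyc hgtop hnc hxS hyS (Ne.symm hxy) ⟨(-2 : ℤ), by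
        show x ^ (-2:ℤ) = y
        rw [zpow_neg, zpow_two, mul_inv_rev]; exact h⟩).elim
    · exact (killCyc hgtop hnc hxS hzS (Ne.symm hxz) ⟨(-2 : ℤ), by
        show x ^ (-2:ℤ) = z
        rw [zpow_neg, zpow_two, mul_inv_rev]; exact h⟩).elim

/-- The set S generates the whole group. -/
lemma closureTop
    (x y z : G) (hS : S = {x, y, z}) (hxy : x ≠ y) (hxz : x ≠ z) (hyz : y ≠ z)
    (hne1 : ∀ s ∈ S, s ≠ (1:G))
    (hsq1 : ∀ s ∈ S, s * s ≠ 1)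
    (hgen : ∀ p ∈ S, ∀ q ∈ S, p ≠ q → Subgroup.closure {p, q} = Subgroup.closure S)
    (hout : ∀ g : G, g ∉ Subgroup.closure S → g * g ∈ S) :
    Subgroup.closure S = ⊤ := by
  by_contra hne
  have hex : ∃ g : G, g ∉ Subgroup.closure S := by
    by_contra hall
    push_neg at hall
    exact hne ((Subgroup.eq_top_iff' (Subgroup.closure S)).mpr hall)
  obtain ⟨g, hg⟩ := hex
  have hginv : g⁻¹ ∉ Subgroup.closure S := fun hmem => hg (by simpa using inv_mem hmem)
  have hs : g * g ∈ S := hout g hg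
  have hsinv : (g * g)⁻¹ ∈ S := by
    have h0 := hout g⁻¹ hginv
    rwa [← mul_inv_rev] at h0
  have hss : (g*g) ≠ (g*g)⁻¹ := by
    intro hcontra
    refine hsq1 (g*g) hs ?_
    nth_rewrite 2 [hcontra]
    group
  have hHz : Subgroup.closure S ≤ Subgroup.zpowers (g*g) := by
    rw [← hgen (g*g) hs (g*g)⁻¹ hsinv hss]
    refine (Subgroup.closure_le _).mpr ?_
    intro t ht
    rw [Set.mem_insert_iff, Set.mem_singleton_iff] at ht
    rcases ht with rfl | rfl
    · exact Subgroup.mem_zpowers _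
    · exact ⟨(-1 : ℤ), by
        show (g*g) ^ (-1:ℤ) = (g*g)⁻¹
        rw [zpow_neg, zpow_one]⟩
  have hkey : ∃ t ∈ S, t ≠ (g*g) ∧ t ≠ (g*g)⁻¹ ∧ ∀ q ∈ S, q = (g*g) ∨ q = (g*g)⁻¹ ∨ q = t := by
    rcases memS hS hs with h1|h1|h1 <;> rcases memS hS hsinv with h2|h2|h2
    · exact absurd (h1.trans h2.symm) hss
    · refine ⟨z, inS₃ hS, by rw [h1]; exact Ne.symm hxz, by rw [h2]; exact Ne.symm hyz, ?_⟩
      intro q hq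
      rcases memS hS hq with rfl|rfl|rfl
      · exact Or.inl h1.symm
      · exact Or.inr (Or.inl h2.symm)
      · exact Or.inr (Or.inr rfl)
    · refine ⟨y, inS₂ hS, by rw [h1]; exact Ne.symm hxy, by rw [h2]; exact hyz, ?_⟩
      intro q hq
      rcases memS hS hq with rfl|rfl|rfl
      · exact Or.inl h1.symm
      · exact Or.inr (Or.inr rfl)
      · exact Or.inr (Or.inl h2.symm)
    · refine ⟨z, inS₃ hS, by rw [h1]; exact Ne.symm hyz, by rw [h2]; exact Ne.symm hxz, ?_⟩
      intro q hq
      rcases memS hS hq with rfl|rfl|rfl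
      · exact Or.inr (Or.inl h2.symm)
      · exact Or.inl h1.symm
      · exact Or.inr (Or.inr rfl)
    · exact absurd (h1.trans h2.symm) hss
    · refine ⟨x, inS₁ hS, by rw [h1]; exact hxy, by rw [h2]; exact hxz, ?_⟩
      intro q hq
      rcases memS hS hq with rfl|rfl|rfl
      · exact Or.inr (Or.inr rfl)
      · exact Or.inl h1.symm
      · exact Or.inr (Or.inl h2.symm)
    · refine ⟨y, inS₂ hS, by rw [h1]; exact hyz, by rw [h2]; exact Ne.symm hxy, ?_⟩
      intro q hq
      rcases memS hS hq with rfl|rfl|rfl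
      · exact Or.inr (Or.inl h2.symm)
      · exact Or.inr (Or.inr rfl)
      · exact Or.inl h1.symm
    · refine ⟨x, inS₁ hS, by rw [h1]; exact hxz, by rw [h2]; exact hxy, ?_⟩
      intro q hq
      rcases memS hS hq with rfl|rfl|rfl
      · exact Or.inr (Or.inr rfl)
      · exact Or.inr (Or.inl h2.symm)
      · exact Or.inl h1.symm
    · exact absurd (h1.trans h2.symm) hss
  obtain ⟨t, htS, hts, htsi, hall⟩ := hkey
  have hsq_out : ∀ w : G, w ∉ Subgroup.closure S → w*w = g*g ∨ w*w = (g*g)⁻¹ := by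
    intro w hw
    have h2 : w * w ∈ S := hout w hw
    have hwinv : w⁻¹ ∉ Subgroup.closure S := fun hmem => hw (by simpa using inv_mem hmem)
    have h2i : (w * w)⁻¹ ∈ S := by
      have h0 := hout w⁻¹ hwinv
      rwa [← mul_inv_rev] at h0
    rcases hall (w*w) h2 with h|h|h
    · exact Or.inl h
    · exact Or.inr h
    · exfalso
      rcases hall ((w*w)⁻¹) h2i with h'|h'|h'
      · refine htsi ?_
        rw [← h]
        rw [← h', inv_inv]
      · refine hts ?_
        rw [← h]
        have := congrArg Inv.inv h'
        rwa [inv_inv, inv_inv] at this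
      · refine hsq1 t htS ?_
        rw [← h] at h' ⊢
        nth_rewrite 2 [← h']
        group
  have hcent : ∀ w : G, w * (g*g) = (g*g) * w := by
    intro w
    by_cases hw : w ∈ Subgroup.closure S
    · obtain ⟨k, hk⟩ := hHz hw
      rw [← hk]
      exact (((Commute.refl (g*g)).zpow_left k).eq)
    · rcases hsq_out w hw with h|h
      · calc w * (g*g) = w * (w * w) := by rw [h]
          _ = (w * w) * w := by group
          _ = (g*g) * w := by rw [h]
      · have hcc : Commute w ((g*g)⁻¹) := by
          show w * (g*g)⁻¹ = (g*g)⁻¹ * w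
          calc w * (g*g)⁻¹ = w * (w * w) := by rw [h]
            _ = (w * w) * w := by group
            _ = (g*g)⁻¹ * w := by rw [h]
        exact (Commute.inv_right_iff.mp hcc).eq
  have hgsH : g * (g*g) ∉ Subgroup.closure S := by
    intro hmem
    refine hg ?_
    have hsH : (g*g) ∈ Subgroup.closure S := Subgroup.subset_closure hs
    have := mul_mem hmem (inv_mem hsH)
    rwa [show g * (g*g) * (g*g)⁻¹ = g by group] at this
  have h3 : (g * (g*g)) * (g * (g*g)) = (g*g) * ((g*g) * (g*g)) := by
    calc (g * (g*g)) * (g * (g*g)) = g * ((g*g) * g) * (g*g) := by group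
      _ = g * (g * (g*g)) * (g*g) := by rw [hcent g]
      _ = (g*g) * ((g*g) * (g*g)) := by group
  rcases hsq_out (g * (g*g)) hgsH with h4 | h4
  · rw [h3] at h4
    exact hsq1 (g*g) hs (mul_left_cancel (show (g*g) * ((g*g)*(g*g)) = (g*g) * 1 by
      rw [mul_one]; exact h4))
  · -- (g*g)^4 = 1
    rw [h3] at h4
    obtain ⟨k, hk⟩ := hHz (Subgroup.subset_closure htS)
    have h1four : (g*g) * ((g*g) * (g*g)) * (g*g) = 1 := by
      rw [h4]; group
    have hz4 : (g*g) ^ (4:ℤ) = 1 := by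
      rw [show (4:ℤ) = 1 + 2 + 1 by norm_num, zpow_add, zpow_add, zpow_one, zpow_two]
      exact h1four
    have hk' : (g*g) ^ (k % 4) = t := by
      have hksplit : k = 4 * (k / 4) + k % 4 := (Int.mul_ediv_add_emod k 4).symm
      calc (g*g) ^ (k % 4) = ((g*g) ^ (4:ℤ)) ^ (k / 4) * (g*g) ^ (k % 4) := by
            rw [hz4]; simp
        _ = (g*g) ^ (4 * (k / 4) + k % 4) := by rw [zpow_add, zpow_mul]
        _ = (g*g) ^ k := by rw [← hksplit]
        _ = t := hk
    have hkr : k % 4 = 0 ∨ k % 4 = 1 ∨ k % 4 = 2 ∨ k % 4 = 3 := by omega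
    rcases hkr with hr|hr|hr|hr
    · rw [hr] at hk'
      simp at hk'
      exact hne1 t htS hk'.symm
    · rw [hr] at hk'
      simp at hk'
      exact hts hk'.symm
    · rw [hr] at hk'
      have ht2 : t = (g*g) * (g*g) := by rw [← hk', zpow_two]
      refine hsq1 t htS ?_
      rw [ht2]
      calc ((g*g) * (g*g)) * ((g*g) * (g*g)) = ((g*g) * ((g*g) * (g*g))) * (g*g) := by group
        _ = 1 := h1four
    · rw [hr] at hk'
      refine htsi ?_
      rw [← hk']
      rw [show (3:ℤ) = 1 + 2 by norm_num, zpow_add, zpow_one, zpow_two]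
      exact h4

end CoverStruct

theorem stmt14 {G : Type*} [Group G] [Fintype G] (S : Set G) (hcard : S.ncard = 3)
    (h : locallyMaximalPF S)
    (hgen : ∀ x ∈ S, ∀ y ∈ S, x ≠ y → Subgroup.closure {x, y} = Subgroup.closure S)
    (hinv : ∀ s ∈ S, orderOf s ≠ 2) :
    Nat.card G ≤ 24 := by
  classical
  obtain ⟨a, b, c, hab, hac, hbc, rfl⟩ := Set.ncard_eq_three.mp hcard
  have hpf : ∀ u ∈ ({a,b,c} : Set G), ∀ v ∈ ({a,b,c} : Set G), u * v ∉ ({a,b,c} : Set G) := h.1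
  have h1n : (1:G) ∉ ({a,b,c} : Set G) := fun h1 => hpf 1 h1 1 h1 (by simpa using h1)
  have hne1 : ∀ s ∈ ({a,b,c} : Set G), s ≠ (1:G) := fun s hs h1 => h1n (h1 ▸ hs)
  have hsq1 : ∀ s ∈ ({a,b,c} : Set G), s * s ≠ 1 := by
    intro s hs hss
    have hd : orderOf s ∣ 2 := orderOf_dvd_of_pow_eq_one (by rw [pow_two]; exact hss)
    rcases (Nat.dvd_prime Nat.prime_two).mp hd with h1 | h2
    · exact hne1 s hs (orderOf_eq_one_iff.mp h1)
    · exact hinv s hs h2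
  have hviol : ∀ g : G, g ∉ ({a,b,c} : Set G) →
      ∃ u ∈ insert g ({a,b,c} : Set G), ∃ v ∈ insert g ({a,b,c} : Set G),
        u * v ∈ insert g ({a,b,c} : Set G) := by
    intro g hgS
    by_contra hno
    push_neg at hno
    have hTpf : productFree (insert g ({a,b,c} : Set G)) := fun u hu v hv => hno u hu v hv
    have heq := h.2 _ hTpf (Set.subset_insert g _)
    exact hgS (heq ▸ Set.mem_insert g _)
  have hcov : ∀ g : G, g ∈ ({a,b,c} : Set G) ∨ g = 1 ∨
      (∃ u ∈ ({a,b,c} : Set G), ∃ v ∈ ({a,b,c} : Set G), u * v = g) ∨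
      (∃ u ∈ ({a,b,c} : Set G), ∃ v ∈ ({a,b,c} : Set G), g * u = v) ∨
      (∃ u ∈ ({a,b,c} : Set G), ∃ v ∈ ({a,b,c} : Set G), u * g = v) ∨
      g * g ∈ ({a,b,c} : Set G) := by
    intro g
    by_cases hgS : g ∈ ({a,b,c} : Set G)
    · exact Or.inl hgS
    right
    obtain ⟨u, hu, v, hv, huv⟩ := hviol g hgS
    rcases Set.mem_insert_iff.mp hu with rfl | huS
    · rcases Set.mem_insert_iff.mp hv with rfl | hvS
      · rcases Set.mem_insert_iff.mp huv with h1 | h2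
        · exact Or.inl (mul_eq_right.mp h1)
        · exact Or.inr (Or.inr (Or.inr (Or.inr h2)))
      · rcases Set.mem_insert_iff.mp huv with h1 | h2
        · exact absurd (mul_eq_left.mp h1) (hne1 v hvS)
        · exact Or.inr (Or.inr (Or.inl ⟨v, hvS, u*v, h2, rfl⟩))
    · rcases Set.mem_insert_iff.mp hv with rfl | hvS
      · rcases Set.mem_insert_iff.mp huv with h1 | h2
        · exact absurd (mul_eq_right.mp h1) (hne1 u huS)
        · exact Or.inr (Or.inr (Or.inr (Or.inl ⟨u, huS, u*v, h2, rfl⟩)))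
      · rcases Set.mem_insert_iff.mp huv with h1 | h2
        · exact Or.inr (Or.inl ⟨u, huS, v, hvS, h1⟩)
        · exact absurd h2 (hpf u huS v hvS)
  have hout : ∀ g : G, g ∉ Subgroup.closure ({a,b,c} : Set G) →
      g * g ∈ ({a,b,c} : Set G) := by
    intro g hg
    have hgS : g ∉ ({a,b,c} : Set G) := fun hmem => hg (Subgroup.subset_closure hmem)
    obtain ⟨u, hu, v, hv, huv⟩ := hviol g hgS
    rcases Set.mem_insert_iff.mp hu with rfl | huS
    · rcases Set.mem_insert_iff.mp hv with rfl | hvS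
      · rcases Set.mem_insert_iff.mp huv with h1 | h2
        · exact absurd (by rw [mul_eq_right.mp h1]; exact one_mem _) hg
        · exact h2
      · rcases Set.mem_insert_iff.mp huv with h1 | h2
        · exact absurd (mul_eq_left.mp h1) (hne1 v hvS)
        · exfalso
          refine hg ?_
          have h3 := Subgroup.subset_closure h2
          have h4 := Subgroup.subset_closure hvS
          have h5 := mul_mem h3 (inv_mem h4)
          rwa [show u * v * v⁻¹ = u by group] at h5
    · rcases Set.mem_insert_iff.mp hv with rfl | hvS
      · rcases Set.mem_insert_iff.mp huv with h1 | h2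
        · exact absurd (mul_eq_right.mp h1) (hne1 u huS)
        · exfalso
          refine hg ?_
          have h3 := Subgroup.subset_closure h2
          have h4 := Subgroup.subset_closure huS
          have h5 := mul_mem (inv_mem h4) h3
          rwa [show u⁻¹ * (u * v) = v by group] at h5
      · rcases Set.mem_insert_iff.mp huv with h1 | h2
        · exfalso
          refine hg ?_
          rw [← h1]
          exact mul_mem (Subgroup.subset_closure huS) (Subgroup.subset_closure hvS)
        · exact absurd h2 (hpf u huS v hvS)
  have hSrfl : ({a,b,c} : Set G) = {a,b,c} := rfl
  have hclose : Subgroup.closure ({a,b,c} : Set G) = ⊤ :=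
    closureTop a b c hSrfl hab hac hbc hne1 hsq1 hgen hout
  have hgtop : ∀ p ∈ ({a,b,c} : Set G), ∀ q ∈ ({a,b,c} : Set G), p ≠ q →
      Subgroup.closure ({p, q} : Set G) = ⊤ :=
    fun p hp q hq hne => (hgen p hp q hq hne).trans hclose
  by_cases hnc : ∀ p q : G, p * q = q * p
  · exact abelianCase hcov hne1 hsq1 hgtop hnc a b c hSrfl hab hac hbc
  · rcases tri hpf hcov hne1 hsq1 hgtop hnc a b c hSrfl hab hac hbc with hca | hord | hord
    · rcases tri hpf hcov hne1 hsq1 hgtop hnc b a c (swapS hSrfl) (Ne.symm hab) hbc hac with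
        hcb | hord | hord
      · rcases tri hpf hcov hne1 hsq1 hgtop hnc c a b (rotS (rotS hSrfl)) (Ne.symm hac)
          (Ne.symm hbc) hab with hcc | hord | hord
        · exact caseA hcov hne1 hsq1 hgtop hnc a b c hSrfl hab hac hbc hca hcb hcc
        · exact caseB hpf hcov hne1 hsq1 hgtop hnc c a b (rotS (rotS hSrfl)) (Ne.symm hac)
            (Ne.symm hbc) hab hord
        · exact caseB hpf hcov hne1 hsq1 hgtop hnc c b a (swapS (rotS hSrfl)) (Ne.symm hbc)
            (Ne.symm hac) (Ne.symm hab) hord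
      · exact caseB hpf hcov hne1 hsq1 hgtop hnc b a c (swapS hSrfl) (Ne.symm hab) hbc hac hord
      · exact caseB hpf hcov hne1 hsq1 hgtop hnc b c a (rotS hSrfl) hbc (Ne.symm hab)
          (Ne.symm hac) hord
    · exact caseB hpf hcov hne1 hsq1 hgtop hnc a b c hSrfl hab hac hbc hord
    · exact caseB hpf hcov hne1 hsq1 hgtop hnc a c b (swapS (rotS (rotS hSrfl))) hac hab
        (Ne.symm hbc) hord
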